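/- Let D be a division ring with a valuation ν : D → G ∪ {∞} onto an ordered group G. Let K be a division subring of D equal to its own bicentralizer, with centralizer K', and assume the left K-space KcK' is infinite-dimensional over K for every nonzero c ∈ D. Then L = {u ∈ K' : ν(u) = 1} is a normal subgroup of the multiplicative group K'^× and L is not contained in K. -/
import Mathlib


/-- Let `D` be a division ring with a valuation `ν` onto an ordered
group `G` (written multiplicatively).  Let `K` be a division subring of `D` equal to its
own bicentralizer, whose centralizer `K'` is such that the left `K`-space `K·c·K'` is
infinite-dimensional over `K` for every nonzero `c ∈ D`.  Then
`L = {u ∈ K' : ν u = 1}` is a normal subgroup of `K'ˣ` not contained in `K`. -/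
theorem valuation_one_subgroup_normal_not_in_K
    (D G : Type*) [DivisionRing D] [Group G] [LinearOrder G]
    [CovariantClass G G (· * ·) (· ≤ ·)]
    [CovariantClass G G (Function.swap (· * ·)) (· ≤ ·)]
    (ν : D → G)
    (hν_mul : ∀ a b : D, a ≠ 0 → b ≠ 0 → ν (a * b) = ν a * ν b)
    (hν_add : ∀ a b : D, a ≠ 0 → b ≠ 0 → a + b ≠ 0 → min (ν a) (ν b) ≤ ν (a + b))
    (hν_surj : ∀ g : G, ∃ a : D, a ≠ 0 ∧ ν a = g)
    (K : Subfield D)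
    (hbicent : Subring.centralizer (Subring.centralizer (K : Set D) : Set D) = K.toSubring)
    (hKcK' : ∀ c : D, c ≠ 0 → ∀ n : ℕ, ∃ v : Fin n → D,
      (∀ i, ∃ k ∈ K, ∃ k' ∈ Subring.centralizer (K : Set D), v i = k * c * k') ∧
      ∀ a : Fin n → D, (∀ i, a i ∈ K) → (∑ i, a i * v i = 0) → ∀ i, a i = 0) :
    ((1 : D) ∈ {u : D | u ∈ Subring.centralizer (K : Set D) ∧ u ≠ 0 ∧ ν u = 1}) ∧
    (∀ u ∈ {u : D | u ∈ Subring.centralizer (K : Set D) ∧ u ≠ 0 ∧ ν u = 1},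
     ∀ v ∈ {u : D | u ∈ Subring.centralizer (K : Set D) ∧ u ≠ 0 ∧ ν u = 1},
      u * v ∈ {u : D | u ∈ Subring.centralizer (K : Set D) ∧ u ≠ 0 ∧ ν u = 1}) ∧
    (∀ u ∈ {u : D | u ∈ Subring.centralizer (K : Set D) ∧ u ≠ 0 ∧ ν u = 1},
      u⁻¹ ∈ {u : D | u ∈ Subring.centralizer (K : Set D) ∧ u ≠ 0 ∧ ν u = 1}) ∧
    (∀ u ∈ {u : D | u ∈ Subring.centralizer (K : Set D) ∧ u ≠ 0 ∧ ν u = 1},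
      ∀ w : D, w ∈ Subring.centralizer (K : Set D) → w ≠ 0 →
        w * u * w⁻¹ ∈ {u : D | u ∈ Subring.centralizer (K : Set D) ∧ u ≠ 0 ∧ ν u = 1}) ∧
    ¬ (∀ u ∈ {u : D | u ∈ Subring.centralizer (K : Set D) ∧ u ≠ 0 ∧ ν u = 1},
        u ∈ K) := by
  -- basic valuation facts
  have hν1 : ν 1 = 1 := by
    have h := hν_mul 1 1 one_ne_zero one_ne_zero
    rw [one_mul] at h
    exact (left_eq_mul.mp h)
  have hνinv : ∀ a : D, a ≠ 0 → ν a⁻¹ = (ν a)⁻¹ := by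
    intro a ha
    have h := hν_mul a a⁻¹ ha (inv_ne_zero ha)
    rw [mul_inv_cancel₀ ha, hν1] at h
    exact eq_inv_of_mul_eq_one_right h.symm
  have hνneg1 : ν (-1 : D) = 1 := by
    have h := hν_mul (-1) (-1) (neg_ne_zero.mpr one_ne_zero) (neg_ne_zero.mpr one_ne_zero)
    rw [neg_mul_neg, one_mul, hν1] at h
    rcases lt_trichotomy (ν (-1 : D)) 1 with hlt | heq | hgt
    · exact absurd h.symm (ne_of_lt (mul_lt_one hlt hlt))
    · exact heq
    · have h2 : (1 : G) * 1 < ν (-1 : D) * ν (-1 : D) :=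
        mul_lt_mul_of_lt_of_le hgt hgt.le
      rw [one_mul] at h2
      exact absurd h.symm (ne_of_gt h2)
  have hνneg : ∀ a : D, a ≠ 0 → ν (-a) = ν a := by
    intro a ha
    have h := hν_mul (-1) a (neg_ne_zero.mpr one_ne_zero) ha
    rw [neg_one_mul, hνneg1, one_mul] at h
    exact h
  set C := Subring.centralizer (K : Set D) with hCdef
  have hCinv : ∀ x : D, x ∈ C → x⁻¹ ∈ C := by
    intro x hx
    rcases eq_or_ne x 0 with rfl | hx0
    · simpa using hx
    rw [Subring.mem_centralizer_iff] at hx ⊢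
    intro g hg
    have h := hx g hg
    calc g * x⁻¹ = x⁻¹ * (x * g) * x⁻¹ := by
          rw [← mul_assoc, inv_mul_cancel₀ hx0, one_mul]
      _ = x⁻¹ * (g * x) * x⁻¹ := by rw [← h]
      _ = x⁻¹ * g * (x * x⁻¹) := by rw [← mul_assoc x⁻¹ g x, mul_assoc (x⁻¹ * g) x x⁻¹]
      _ = x⁻¹ * g := by rw [mul_inv_cancel₀ hx0, mul_one]
  refine ⟨⟨Subring.one_mem _, one_ne_zero, hν1⟩, ?_, ?_, ?_, ?_⟩
  · rintro u ⟨huC, hu0, huν⟩ v ⟨hvC, hv0, hvν⟩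
    exact ⟨Subring.mul_mem _ huC hvC, mul_ne_zero hu0 hv0, by
      rw [hν_mul u v hu0 hv0, huν, hvν, one_mul]⟩
  · rintro u ⟨huC, hu0, huν⟩
    exact ⟨hCinv u huC, inv_ne_zero hu0, by rw [hνinv u hu0, huν, inv_one]⟩
  · rintro u ⟨huC, hu0, huν⟩ w hwC hw0
    refine ⟨Subring.mul_mem _ (Subring.mul_mem _ hwC huC) (hCinv w hwC),
      mul_ne_zero (mul_ne_zero hw0 hu0) (inv_ne_zero hw0), ?_⟩
    rw [hν_mul _ _ (mul_ne_zero hw0 hu0) (inv_ne_zero hw0), hν_mul _ _ hw0 hu0,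
      huν, mul_one, hνinv w hw0]
    group
  · intro hL
    -- first: every x ∈ C with 1 < ν x lies in K
    have hkey : ∀ x : D, x ∈ C → x ≠ 0 → 1 < ν x → x ∈ K := by
      intro x hxC hx0 hgt
      have hx1 : x ≠ 1 := by
        rintro rfl
        rw [hν1] at hgt
        exact lt_irrefl _ hgt
      have h1x : (1 : D) + -x ≠ 0 := by
        intro h
        rw [← sub_eq_add_neg, sub_eq_zero] at h
        exact hx1 h.symm
      have hlow : (1 : G) ≤ ν (1 + -x) := by
        have h := hν_add 1 (-x) one_ne_zero (neg_ne_zero.mpr hx0) h1x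
        rw [hν1, hνneg x hx0, min_eq_left hgt.le] at h
        exact h
      have hhigh : ν (1 + -x) ≤ 1 := by
        have h := hν_add (1 + -x) x h1x hx0 (by simp)
        rw [show (1 : D) + -x + x = 1 by abel, hν1] at h
        rcases min_le_iff.mp h with h1 | h2
        · exact h1
        · exact absurd h2 (not_le.mpr hgt)
      have hmem : (1 : D) + -x ∈ {u : D | u ∈ C ∧ u ≠ 0 ∧ ν u = 1} :=
        ⟨Subring.add_mem _ (Subring.one_mem _) (Subring.neg_mem _ hxC), h1x,
          le_antisymm hhigh hlow⟩
      have hK' := hL _ hmem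
      have : x = 1 - (1 + -x) := by abel
      rw [this]
      exact K.sub_mem K.one_mem hK'
    have hCK : ∀ x : D, x ∈ C → x ∈ K := by
      intro x hxC
      rcases eq_or_ne x 0 with rfl | hx0
      · exact K.zero_mem
      rcases lt_trichotomy (ν x) 1 with hlt | heq | hgt
      · have hinv : 1 < ν x⁻¹ := by
          rw [hνinv x hx0]
          exact one_lt_inv_of_inv hlt
        have := hkey x⁻¹ (hCinv x hxC) (inv_ne_zero hx0) hinv
        have h2 := K.inv_mem this
        rwa [inv_inv] at h2
      · exact hL x ⟨hxC, hx0, heq⟩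
      · exact hkey x hxC hx0 hgt
    -- now contradict infinite-dimensionality with c = 1, n = 2
    obtain ⟨v, hv1, hv2⟩ := hKcK' 1 one_ne_zero 2
    have hvK : ∀ i, v i ∈ K := by
      intro i
      obtain ⟨k, hk, k', hk', hvi⟩ := hv1 i
      rw [hvi]
      exact K.mul_mem (K.mul_mem hk K.one_mem) (hCK k' hk')
    by_cases h0 : v 0 = 0
    · have := hv2 ![1, 0] (by
        intro i
        fin_cases i
        · exact K.one_mem
        · exact K.zero_mem) (by
        rw [Fin.sum_univ_two]
        simp [h0]) 0
      simp at this
    · have := hv2 ![v 1 * (v 0)⁻¹, -1] (by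
        intro i
        fin_cases i
        · exact K.mul_mem (hvK 1) (K.inv_mem (hvK 0))
        · exact K.neg_mem K.one_mem) (by
        rw [Fin.sum_univ_two]
        show v 1 * (v 0)⁻¹ * v 0 + -1 * v 1 = 0
        rw [mul_assoc, inv_mul_cancel₀ h0, mul_one, neg_one_mul, add_neg_cancel]) 1
      simp at this
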